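/- Let 𝔤 be a finite-dimensional complex reductive Lie algebra with rank r, and let F₁,…,F_r be algebraically independent generators of S(𝔤)^G. For ξ ∈ 𝔤* and a ∈ 𝔤*, let V_{a,ξ} be the image in T_ξ(Gξ)* = (𝔤ξ)* of the span of the differentials d_ξ(∂_a^k F_i). Then V_{a,ξ} is an isotropic subspace of the symplectic vector space 𝔤ξ (with the Kirillov–Kostant–Souriau form), and hence 2·dim V_{a,ξ} ≤ dim(Gξ). -/

import Mathlib

open MvPolynomial

variable {ι : Type*} [Fintype ι] [DecidableEq ι]
variable {g : Type*} [LieRing g] [LieAlgebra ℂ g]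

noncomputable def linPoly (b : Module.Basis ι ℂ g) (v : g) : MvPolynomial ι ℂ :=
  ∑ i, MvPolynomial.C (b.repr v i) * MvPolynomial.X i

noncomputable def kirillovBracket (b : Module.Basis ι ℂ g) (f p : MvPolynomial ι ℂ) :
    MvPolynomial ι ℂ :=
  ∑ i, ∑ j, pderiv i f * pderiv j p * linPoly b ⁅b i, b j⁆

noncomputable def evalAt (b : Module.Basis ι ℂ g) (ξ : Module.Dual ℂ g)
    (f : MvPolynomial ι ℂ) : ℂ :=
  MvPolynomial.eval (fun i => ξ (b i)) f

noncomputable def diffAt (b : Module.Basis ι ℂ g) (ξ : Module.Dual ℂ g)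
    (f : MvPolynomial ι ℂ) : g :=
  ∑ i, evalAt b ξ (pderiv i f) • b i

noncomputable def dirDeriv (b : Module.Basis ι ℂ g) (a : Module.Dual ℂ g)
    (f : MvPolynomial ι ℂ) : MvPolynomial ι ℂ :=
  ∑ i, a (b i) • pderiv i f

attribute [local instance 100] LieRing.ofAssociativeRing

/-- The coadjoint map u ↦ ad*(u)ξ (up to sign): u ↦ ξ∘(ad u). -/
noncomputable def coadMap (ξ : Module.Dual ℂ g) : g →ₗ[ℂ] Module.Dual ℂ g :=
  (LinearMap.llcomp ℂ g g ℂ ξ).comp (LieAlgebra.ad ℂ g).toLinearMap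

set_option linter.unusedSectionVars false

noncomputable def kaBracket (b : Module.Basis ι ℂ g) (a : Module.Dual ℂ g)
    (f p : MvPolynomial ι ℂ) : MvPolynomial ι ℂ :=
  ∑ i, ∑ j, pderiv i f * pderiv j p * MvPolynomial.C (a ⁅b i, b j⁆)

section Lemmas
variable (b : Module.Basis ι ℂ g) (a ξ : Module.Dual ℂ g)

theorem pderiv_comm' (i j : ι) (f : MvPolynomial ι ℂ) :
    pderiv i (pderiv j f) = pderiv j (pderiv i f) := by
  induction f using MvPolynomial.induction_on with
  | C c => simp
  | add p q hp hq => simp [hp, hq]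
  | mul_X p k ih =>
      simp only [pderiv_mul, map_add, pderiv_X, ih, Pi.single_apply]
      split_ifs <;> simp <;> ring

theorem linPoly_basis (j : ι) : linPoly b (b j) = X j := by
  simp [linPoly, Module.Basis.repr_self, Finsupp.single_apply, apply_ite (MvPolynomial.C (R := ℂ)),
    ite_mul, Finset.sum_ite_eq']

theorem linPoly_neg (v : g) : linPoly b (-v) = -linPoly b v := by
  simp [linPoly, Finset.sum_neg_distrib]

theorem evalAt_linPoly (v : g) : evalAt b ξ (linPoly b v) = ξ v := by
  simp only [evalAt, linPoly, map_sum, eval_mul, eval_C, eval_X]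
  have : ∑ x : ι, (b.repr v) x * ξ (b x) = ξ (∑ x : ι, (b.repr v) x • b x) := by
    simp only [map_sum, map_smul, smul_eq_mul]
  rw [this, b.sum_repr v]

theorem kb_antisymm (f p : MvPolynomial ι ℂ) :
    kirillovBracket b p f = -kirillovBracket b f p := by
  unfold kirillovBracket
  rw [Finset.sum_comm, ← Finset.sum_neg_distrib]
  refine Finset.sum_congr rfl fun i _ => ?_
  rw [← Finset.sum_neg_distrib]
  refine Finset.sum_congr rfl fun j _ => ?_
  rw [← lie_skew (b i) (b j), linPoly_neg]
  ring

theorem ka_antisymm (f p : MvPolynomial ι ℂ) :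
    kaBracket b a p f = -kaBracket b a f p := by
  unfold kaBracket
  rw [Finset.sum_comm, ← Finset.sum_neg_distrib]
  refine Finset.sum_congr rfl fun i _ => ?_
  rw [← Finset.sum_neg_distrib]
  refine Finset.sum_congr rfl fun j _ => ?_
  rw [← lie_skew (b i) (b j), map_neg, map_neg]
  ring

theorem dirDeriv_sum {s : Finset ι} {F : ι → MvPolynomial ι ℂ} :
    dirDeriv b a (∑ x ∈ s, F x) = ∑ x ∈ s, dirDeriv b a (F x) := by
  unfold dirDeriv
  rw [Finset.sum_comm]
  refine Finset.sum_congr rfl fun i _ => ?_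
  simp [Finset.smul_sum]

theorem dirDeriv_mul (f p : MvPolynomial ι ℂ) :
    dirDeriv b a (f * p) = dirDeriv b a f * p + f * dirDeriv b a p := by
  unfold dirDeriv
  rw [Finset.sum_mul, Finset.mul_sum, ← Finset.sum_add_distrib]
  refine Finset.sum_congr rfl fun i _ => ?_
  rw [pderiv_mul, smul_add, smul_mul_assoc, mul_smul_comm]

theorem dirDeriv_C (c : ℂ) : dirDeriv b a (MvPolynomial.C c) = 0 := by
  simp [dirDeriv]

theorem dirDeriv_linPoly (v : g) : dirDeriv b a (linPoly b v) = MvPolynomial.C (a v) := by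
  unfold dirDeriv
  have h1 : ∀ i : ι, pderiv i (linPoly b v) = MvPolynomial.C (b.repr v i) := by
    intro i
    simp [linPoly, pderiv_X, Pi.single_apply, mul_ite, Finset.sum_ite_eq']
  simp only [h1]
  have h2 : ∀ i : ι, a (b i) • (MvPolynomial.C ((b.repr v) i) : MvPolynomial ι ℂ)
      = MvPolynomial.C ((b.repr v) i * a (b i)) := by
    intro i; rw [smul_eq_C_mul, ← map_mul, mul_comm]
  rw [Finset.sum_congr rfl fun i _ => h2 i, ← map_sum]
  congr 1
  have : ∑ x : ι, (b.repr v) x * a (b x) = a (∑ x : ι, (b.repr v) x • b x) := by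
    simp only [map_sum, map_smul, smul_eq_mul]
  rw [this, b.sum_repr v]

theorem pderiv_dirDeriv (i : ι) (f : MvPolynomial ι ℂ) :
    pderiv i (dirDeriv b a f) = dirDeriv b a (pderiv i f) := by
  unfold dirDeriv
  rw [map_sum]
  refine Finset.sum_congr rfl fun j _ => ?_
  rw [Derivation.map_smul, pderiv_comm']

theorem dirDeriv_kb (f p : MvPolynomial ι ℂ) :
    dirDeriv b a (kirillovBracket b f p) =
      kirillovBracket b (dirDeriv b a f) p + kirillovBracket b f (dirDeriv b a p)
        + kaBracket b a f p := by
  unfold kirillovBracket kaBracket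
  rw [dirDeriv_sum, ← Finset.sum_add_distrib, ← Finset.sum_add_distrib]
  refine Finset.sum_congr rfl fun i _ => ?_
  rw [dirDeriv_sum, ← Finset.sum_add_distrib, ← Finset.sum_add_distrib]
  refine Finset.sum_congr rfl fun j _ => ?_
  rw [dirDeriv_mul, dirDeriv_mul, dirDeriv_linPoly, pderiv_dirDeriv, pderiv_dirDeriv]
  ring

theorem dirDeriv_ka (f p : MvPolynomial ι ℂ) :
    dirDeriv b a (kaBracket b a f p) =
      kaBracket b a (dirDeriv b a f) p + kaBracket b a f (dirDeriv b a p) := by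
  unfold kaBracket
  rw [dirDeriv_sum, ← Finset.sum_add_distrib]
  refine Finset.sum_congr rfl fun i _ => ?_
  rw [dirDeriv_sum, ← Finset.sum_add_distrib]
  refine Finset.sum_congr rfl fun j _ => ?_
  rw [dirDeriv_mul, dirDeriv_mul, dirDeriv_C, pderiv_dirDeriv, pderiv_dirDeriv]
  ring

theorem inv_kb_zero {F : MvPolynomial ι ℂ}
    (hF : ∀ x : g, kirillovBracket b F (linPoly b x) = 0) (p : MvPolynomial ι ℂ) :
    kirillovBracket b F p = 0 := by
  have hc : ∀ j : ι, ∑ i, pderiv i F * linPoly b ⁅b i, b j⁆ = 0 := by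
    intro j
    have := hF (b j)
    rw [linPoly_basis] at this
    unfold kirillovBracket at this
    rw [Finset.sum_comm] at this
    simpa [pderiv_X, Pi.single_apply, mul_ite, ite_mul, Finset.sum_ite_eq] using this
  unfold kirillovBracket
  rw [Finset.sum_comm]
  refine Finset.sum_eq_zero fun j _ => ?_
  have : ∀ i : ι, pderiv i F * pderiv j p * linPoly b ⁅b i, b j⁆
      = (pderiv i F * linPoly b ⁅b i, b j⁆) * pderiv j p := fun i => by ring
  rw [Finset.sum_congr rfl fun i _ => this i, ← Finset.sum_mul, hc j, zero_mul]

theorem dirDeriv_zero : dirDeriv b a (0 : MvPolynomial ι ℂ) = 0 := by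
  simp [dirDeriv]

theorem dirDeriv_add (f p : MvPolynomial ι ℂ) :
    dirDeriv b a (f + p) = dirDeriv b a f + dirDeriv b a p := by
  simp [dirDeriv, smul_add, Finset.sum_add_distrib]

theorem dirDeriv_Cmul (c : ℂ) (f : MvPolynomial ι ℂ) :
    dirDeriv b a (MvPolynomial.C c * f) = MvPolynomial.C c * dirDeriv b a f := by
  rw [dirDeriv_mul, dirDeriv_C, zero_mul, zero_add]

theorem kb_iter {F : MvPolynomial ι ℂ} (hF : ∀ p, kirillovBracket b F p = 0) :
    ∀ k : ℕ, ∀ p : MvPolynomial ι ℂ,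
      kirillovBracket b ((dirDeriv b a)^[k+1] F) p
        + MvPolynomial.C ((k : ℂ)+1) * kaBracket b a ((dirDeriv b a)^[k] F) p = 0 := by
  intro k
  induction k with
  | zero =>
      intro p
      have h0 := congrArg (dirDeriv b a) (hF p)
      rw [dirDeriv_kb, dirDeriv_zero] at h0
      have h1 := hF (dirDeriv b a p)
      simp only [Function.iterate_one, Function.iterate_zero_apply, Nat.cast_zero, zero_add,
        map_one, one_mul]
      linear_combination h0 - h1
  | succ k IH =>
      intro p
      have h1 := congrArg (dirDeriv b a) (IH p)
      rw [dirDeriv_add, dirDeriv_kb, dirDeriv_Cmul, dirDeriv_ka, dirDeriv_zero] at h1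
      have h2 := IH (dirDeriv b a p)
      simp only [Function.iterate_succ_apply'] at h1 h2 ⊢
      have hc : ((k+1 : ℕ) : ℂ) + 1 = ((k:ℂ)+1) + 1 := by push_cast; ring
      rw [hc, map_add, map_one]
      linear_combination h1 - h2

theorem kb_iter_right {G : MvPolynomial ι ℂ} (hG : ∀ p, kirillovBracket b G p = 0)
    (l : ℕ) (p : MvPolynomial ι ℂ) :
    kirillovBracket b p ((dirDeriv b a)^[l+1] G)
      + MvPolynomial.C ((l : ℂ)+1) * kaBracket b a p ((dirDeriv b a)^[l] G) = 0 := by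
  have h := kb_iter b a hG l p
  rw [kb_antisymm b ((dirDeriv b a)^[l+1] G) p, ka_antisymm b a ((dirDeriv b a)^[l] G) p]
  linear_combination -h

theorem C_nat_succ_ne (k : ℕ) : (MvPolynomial.C ((k : ℂ)+1) : MvPolynomial ι ℂ) ≠ 0 := by
  simp only [ne_eq, MvPolynomial.C_eq_zero]
  intro h
  have : ((k : ℂ)+1) ≠ 0 := by
    have := Nat.cast_add_one_ne_zero (R := ℂ) k
    exact_mod_cast this
  exact this h

theorem ka_iter_zero {F G : MvPolynomial ι ℂ}
    (hF : ∀ p, kirillovBracket b F p = 0) (hG : ∀ p, kirillovBracket b G p = 0) :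
    ∀ k l : ℕ, kaBracket b a ((dirDeriv b a)^[k] F) ((dirDeriv b a)^[l] G) = 0 := by
  intro k
  induction k with
  | zero =>
      intro l
      cases l with
      | zero =>
          have h := kb_iter b a hF 0 ((dirDeriv b a)^[0] G)
          have hz : kirillovBracket b ((dirDeriv b a)^[0+1] F) ((dirDeriv b a)^[0] G) = 0 := by
            rw [kb_antisymm]
            simp only [Function.iterate_zero_apply]
            rw [hG]
            simp
          rw [hz, zero_add] at h
          have := mul_eq_zero.mp h
          rcases this with h' | h'
          · exact absurd h' (C_nat_succ_ne 0)
          · simpa using h'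
      | succ l =>
          have h := kb_iter_right b a hG (l+1) ((dirDeriv b a)^[0] F)
          have hz : kirillovBracket b ((dirDeriv b a)^[0] F) ((dirDeriv b a)^[l+1+1] G) = 0 := by
            simp only [Function.iterate_zero_apply]
            exact hF _
          rw [hz, zero_add] at h
          rcases mul_eq_zero.mp h with h' | h'
          · exact absurd h' (C_nat_succ_ne (l+1))
          · exact h' 
  | succ k IH =>
      intro l
      have h1 := kb_iter b a hF k ((dirDeriv b a)^[l+1] G)
      rw [IH (l+1), mul_zero, add_zero] at h1
      have h2 := kb_iter_right b a hG l ((dirDeriv b a)^[k+1] F)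
      rw [h1, zero_add] at h2
      rcases mul_eq_zero.mp h2 with h' | h'
      · exact absurd h' (C_nat_succ_ne l)
      · exact h'

theorem main_kb_zero {F G : MvPolynomial ι ℂ}
    (hF : ∀ p, kirillovBracket b F p = 0) (hG : ∀ p, kirillovBracket b G p = 0) :
    ∀ k l : ℕ, kirillovBracket b ((dirDeriv b a)^[k] F) ((dirDeriv b a)^[l] G) = 0 := by
  intro k l
  cases k with
  | zero => simpa using hF _
  | succ k =>
      have h := kb_iter b a hF k ((dirDeriv b a)^[l] G)
      rw [ka_iter_zero b a hF hG k l, mul_zero, add_zero] at h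
      exact h

theorem evalAt_kb (f p : MvPolynomial ι ℂ) :
    evalAt b ξ (kirillovBracket b f p) = ξ ⁅diffAt b ξ f, diffAt b ξ p⁆ := by
  unfold kirillovBracket diffAt
  have key : ∀ u v : g, ξ ⁅u, v⁆ = coadMap ξ u v := fun u v => rfl
  have hrhs : ξ ⁅∑ i, evalAt b ξ (pderiv i f) • b i, ∑ j, evalAt b ξ (pderiv j p) • b j⁆
      = ∑ i, ∑ j, evalAt b ξ (pderiv i f) * evalAt b ξ (pderiv j p) * ξ ⁅b i, b j⁆ := by
    rw [key]
    simp only [map_sum, map_smul, LinearMap.sum_apply, LinearMap.smul_apply, smul_eq_mul,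
      Finset.mul_sum]
    rw [Finset.sum_comm]
    refine Finset.sum_congr rfl fun i _ => Finset.sum_congr rfl fun j _ => ?_
    rw [← key]
    ring
  rw [hrhs]
  unfold evalAt
  simp only [map_sum, eval_mul]
  refine Finset.sum_congr rfl fun i _ => ?_
  refine Finset.sum_congr rfl fun j _ => ?_
  have := evalAt_linPoly b ξ ⁅b i, b j⁆
  unfold evalAt at this
  rw [this]

end Lemmas

/-- Let 𝔤 be a complex reductive Lie algebra of rank r with
free generators F₁,…,F_r of S(𝔤)^G.  For ξ, a ∈ 𝔤*, the subspace V_{a,ξ},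
the image in T_ξ(Gξ)* of the span W of the differentials d_ξ(∂_a^k F_i), is
isotropic in the symplectic vector space 𝔤ξ; hence 2·dim V_{a,ξ} ≤ dim Gξ. -/
theorem shifted_invariants_isotropic
    [Module.Finite ℂ g]
    (hreductive : LieAlgebra.radical ℂ g = LieAlgebra.center ℂ g)
    (b : Module.Basis ι ℂ g)
    (r : ℕ) (hr : r = LieAlgebra.rank ℂ g)
    (Fi : Fin r → MvPolynomial ι ℂ)
    (hInd : AlgebraicIndependent ℂ Fi)
    (Inv : Subalgebra ℂ (MvPolynomial ι ℂ))
    (hInv : ∀ p : MvPolynomial ι ℂ, p ∈ Inv ↔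
      ∀ x : g, kirillovBracket b p (linPoly b x) = 0)
    (hGen : Algebra.adjoin ℂ (Set.range Fi) = Inv)
    (ξ a : Module.Dual ℂ g) :
    (∀ u ∈ Submodule.span ℂ
        {w : g | ∃ (k : ℕ) (i : Fin r), w = diffAt b ξ ((dirDeriv b a)^[k] (Fi i))},
     ∀ v ∈ Submodule.span ℂ
        {w : g | ∃ (k : ℕ) (i : Fin r), w = diffAt b ξ ((dirDeriv b a)^[k] (Fi i))},
      ξ ⁅u, v⁆ = 0) ∧
    2 * (Module.finrank ℂ
          ↥(Submodule.span ℂ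
            {w : g | ∃ (k : ℕ) (i : Fin r), w = diffAt b ξ ((dirDeriv b a)^[k] (Fi i))})
        - Module.finrank ℂ
          ↥(Submodule.span ℂ
              {w : g | ∃ (k : ℕ) (i : Fin r), w = diffAt b ξ ((dirDeriv b a)^[k] (Fi i))}
            ⊓ LinearMap.ker (coadMap ξ)))
      ≤ Module.finrank ℂ ↥(LinearMap.range (coadMap ξ)) := by
  classical
  have _inst : FiniteDimensional ℂ g := inferInstance
  set S : Set g := {w : g | ∃ (k : ℕ) (i : Fin r), w = diffAt b ξ ((dirDeriv b a)^[k] (Fi i))}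
    with hSdef
  set Wsp : Submodule ℂ g := Submodule.span ℂ S with hWdef
  -- invariance of the generators
  have hFiInv : ∀ i : Fin r, ∀ p, kirillovBracket b (Fi i) p = 0 := by
    intro i
    refine inv_kb_zero b ?_
    have hmem : Fi i ∈ Inv := by
      rw [← hGen]; exact Algebra.subset_adjoin ⟨i, rfl⟩
    exact (hInv (Fi i)).mp hmem
  -- pairwise vanishing on generators
  have hgen : ∀ u ∈ S, ∀ v ∈ S, ξ ⁅u, v⁆ = 0 := by
    rintro u ⟨k, i, rfl⟩ v ⟨l, j, rfl⟩
    have h := main_kb_zero b a (hFiInv i) (hFiInv j) k l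
    have h2 := congrArg (evalAt b ξ) h
    rw [evalAt_kb] at h2
    simpa [evalAt] using h2
  have key : ∀ u v : g, ξ ⁅u, v⁆ = coadMap ξ u v := fun u v => rfl
  -- extend to the span
  have hstep1 : ∀ u ∈ S, ∀ v ∈ Wsp, ξ ⁅u, v⁆ = 0 := by
    intro u hu v hv
    have hle : Wsp ≤ LinearMap.ker (coadMap ξ u) := by
      rw [hWdef, Submodule.span_le]
      intro w hw
      simp only [SetLike.mem_coe, LinearMap.mem_ker]
      rw [← key]
      exact hgen u hu w hw
    have := hle hv
    rw [key]
    simpa using this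
  have hpart1 : ∀ u ∈ Wsp, ∀ v ∈ Wsp, ξ ⁅u, v⁆ = 0 := by
    intro u hu v hv
    have hle : Wsp ≤ LinearMap.ker ((coadMap ξ).flip v) := by
      rw [hWdef, Submodule.span_le]
      intro w hw
      simp only [SetLike.mem_coe, LinearMap.mem_ker, LinearMap.flip_apply]
      rw [← key]
      exact hstep1 w hw v hv
    have := hle hu
    rw [key]
    simpa using this
  refine ⟨hpart1, ?_⟩
  -- Part 2 : dimension count
  set φ : g →ₗ[ℂ] Module.Dual ℂ g := coadMap ξ with hφ
  set U : Submodule ℂ (Module.Dual ℂ g) := Wsp.map φ with hU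
  set rmap : Module.Dual ℂ g →ₗ[ℂ] Module.Dual ℂ ↥Wsp := Wsp.subtype.dualMap with hrmap
  -- rank-nullity for φ restricted to Wsp
  have h1 : Module.finrank ℂ ↥Wsp
      = Module.finrank ℂ ↥U + Module.finrank ℂ ↥(Wsp ⊓ LinearMap.ker φ) := by
    have hrn := LinearMap.finrank_range_add_finrank_ker (φ ∘ₗ Wsp.subtype)
    have hrange : LinearMap.range (φ ∘ₗ Wsp.subtype) = U := by
      rw [LinearMap.range_comp, Submodule.range_subtype]
    have hker : Module.finrank ℂ ↥(LinearMap.ker (φ ∘ₗ Wsp.subtype))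
        = Module.finrank ℂ ↥(Wsp ⊓ LinearMap.ker φ) := by
      rw [LinearMap.ker_comp]
      rw [← Submodule.finrank_map_subtype_eq Wsp]
      rw [Submodule.map_comap_subtype]
    rw [hrange, hker] at hrn
    omega
  -- U is contained in range φ and in ker rmap
  have hUrange : U ≤ LinearMap.range φ := by
    rw [hU]
    rintro x ⟨u, hu, rfl⟩
    exact ⟨u, rfl⟩
  have hUker : U ≤ LinearMap.ker rmap := by
    rw [hU]
    rintro x ⟨u, hu, rfl⟩
    simp only [LinearMap.mem_ker, hrmap]
    ext w
    have : ξ ⁅u, (w : g)⁆ = 0 := hpart1 u hu w w.2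
    rw [key] at this
    simpa using this
  -- finrank of the image of range φ under rmap equals finrank U
  have hrankeq : Module.finrank ℂ ↥(LinearMap.range (rmap ∘ₗ φ)) = Module.finrank ℂ ↥U := by
    set c : ↥Wsp →ₗ[ℂ] Module.Dual ℂ g := φ ∘ₗ Wsp.subtype with hc
    have hcrange : LinearMap.range c = U := by
      rw [hc, LinearMap.range_comp, Submodule.range_subtype]
    have heq : rmap ∘ₗ φ = -(c.dualMap ∘ₗ Module.Dual.eval ℂ g) := by
      ext u w
      simp only [LinearMap.comp_apply, LinearMap.neg_apply, LinearMap.dualMap_apply,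
        Module.Dual.eval_apply, hrmap, hc, Submodule.coe_subtype]
      have h1 : ξ ⁅(w : g), u⁆ = -ξ ⁅u, (w : g)⁆ := by
        rw [← lie_skew, map_neg]
      have h2 : φ u (w : g) = ξ ⁅u, (w : g)⁆ := rfl
      have h3 : φ (w : g) u = ξ ⁅(w : g), u⁆ := rfl
      rw [h2, h3, h1, neg_neg]
    rw [heq]
    have hnegrange : LinearMap.range (-(c.dualMap ∘ₗ Module.Dual.eval ℂ g))
        = LinearMap.range (c.dualMap ∘ₗ Module.Dual.eval ℂ g) := by
      ext x
      constructor
      · rintro ⟨u, rfl⟩; exact ⟨-u, by simp⟩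
      · rintro ⟨u, rfl⟩; exact ⟨-u, by simp⟩
    rw [hnegrange]
    have hevalsurj : LinearMap.range (Module.Dual.eval ℂ g) = ⊤ := by
      rw [← Module.evalEquiv_toLinearMap]
      exact LinearMap.range_eq_top.mpr (Module.evalEquiv ℂ g).surjective
    have : LinearMap.range (c.dualMap ∘ₗ Module.Dual.eval ℂ g) = LinearMap.range c.dualMap := by
      rw [LinearMap.range_comp, hevalsurj, Submodule.map_top]
    rw [this, LinearMap.finrank_range_dualMap_eq_finrank_range, hcrange]
  -- rank-nullity for rmap restricted to range φ
  have h2 : Module.finrank ℂ ↥(LinearMap.range φ)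
      = Module.finrank ℂ ↥(LinearMap.range (rmap ∘ₗ φ))
        + Module.finrank ℂ ↥(LinearMap.range φ ⊓ LinearMap.ker rmap) := by
    have hrn := LinearMap.finrank_range_add_finrank_ker (rmap ∘ₗ (LinearMap.range φ).subtype)
    have hr1 : LinearMap.range (rmap ∘ₗ (LinearMap.range φ).subtype)
        = LinearMap.range (rmap ∘ₗ φ) := by
      rw [LinearMap.range_comp, Submodule.range_subtype, LinearMap.range_comp]
    have hr2 : Module.finrank ℂ ↥(LinearMap.ker (rmap ∘ₗ (LinearMap.range φ).subtype))
        = Module.finrank ℂ ↥(LinearMap.range φ ⊓ LinearMap.ker rmap) := by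
      rw [LinearMap.ker_comp, ← Submodule.finrank_map_subtype_eq (LinearMap.range φ),
        Submodule.map_comap_subtype]
    rw [hr1, hr2] at hrn
    omega
  have hUle : Module.finrank ℂ ↥U
      ≤ Module.finrank ℂ ↥(LinearMap.range φ ⊓ LinearMap.ker rmap) :=
    Submodule.finrank_mono (le_inf hUrange hUker)
  have hfin : Module.finrank ℂ ↥Wsp - Module.finrank ℂ ↥(Wsp ⊓ LinearMap.ker φ)
      = Module.finrank ℂ ↥U := by omega
  rw [hfin]
  omega
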